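/- Let T be a contraction on H and let Q be the positive operator with Q² = SOT-lim_{m→∞} T^m T^{*m}. Then T Q² T* ≤ Q², and consequently there exists a contraction T̃ on the closure of the range of Q satisfying T̃* Q h = Q T* h for all h ∈ H; moreover T̃ is a co-isometry, i.e. T Q² T* = Q². -/

import Mathlib

open ContinuousLinearMap Filter Topology

noncomputable instance {H : Type*} [NormedAddCommGroup H] [InnerProductSpace ℂ H]
    [CompleteSpace H] (K : Submodule ℂ H) : CompleteSpace K.topologicalClosure :=
  K.isClosed_topologicalClosure.completeSpace_coe

open scoped InnerProductSpace

/-- Extension of `B h ↦ A h` to an isometry on the closure of the range of `B`,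
given that `‖A h‖ = ‖B h‖` and `A` maps into that closure. -/
theorem exists_isometry_extension {H : Type*} [NormedAddCommGroup H]
    [InnerProductSpace ℂ H] [CompleteSpace H] (A B : H →L[ℂ] H)
    [CompleteSpace (LinearMap.range (B : H →ₗ[ℂ] H)).topologicalClosure]
    (hnorm : ∀ h : H, ‖A h‖ = ‖B h‖)
    (hmem : ∀ h : H, A h ∈ (LinearMap.range (B : H →ₗ[ℂ] H)).topologicalClosure) :
    ∃ S : (LinearMap.range (B : H →ₗ[ℂ] H)).topologicalClosure →L[ℂ]
        (LinearMap.range (B : H →ₗ[ℂ] H)).topologicalClosure,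
      (∀ y, ‖S y‖ = ‖y‖) ∧
      ∀ h : H, S ⟨B h, Submodule.le_topologicalClosure _
          (LinearMap.mem_range_self (B : H →ₗ[ℂ] H) h)⟩ = ⟨A h, hmem h⟩ := by
  set K := (LinearMap.range (B : H →ₗ[ℂ] H)).topologicalClosure with hK
  let B' : H →L[ℂ] K := B.codRestrict K fun h =>
    Submodule.le_topologicalClosure _ (LinearMap.mem_range_self _ h)
  let A' : H →L[ℂ] K := A.codRestrict K hmem
  have hnorm' : ∀ h : H, ‖A' h‖ = ‖B' h‖ := fun h => hnorm h
  set Blin : H →ₗ[ℂ] K := (B' : H →ₗ[ℂ] K) with hBlin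
  have hle : LinearMap.ker Blin ≤ LinearMap.ker (A' : H →ₗ[ℂ] K) := by
    intro h hh
    rw [LinearMap.mem_ker] at hh ⊢
    have : ‖A' h‖ = 0 := by rw [hnorm' h]; exact norm_eq_zero.mpr hh
    simpa using norm_eq_zero.mp this
  let f₁ : (H ⧸ LinearMap.ker Blin) →ₗ[ℂ] K :=
    (LinearMap.ker Blin).liftQ (A' : H →ₗ[ℂ] K) hle
  let eB := Blin.quotKerEquivRange
  let S₀ : LinearMap.range Blin →ₗ[ℂ] K := f₁ ∘ₗ (eB.symm : LinearMap.range Blin →ₗ[ℂ] _)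
  have hS₀ : ∀ h : H, S₀ ⟨Blin h, LinearMap.mem_range_self _ h⟩ = A' h := by
    intro h
    have h1 : eB.symm ⟨Blin h, LinearMap.mem_range_self _ h⟩ = Submodule.Quotient.mk h := by
      rw [LinearEquiv.symm_apply_eq]
      exact Subtype.ext (Blin.quotKerEquivRange_apply_mk h).symm
    show f₁ (eB.symm ⟨Blin h, LinearMap.mem_range_self _ h⟩) = A' h
    rw [h1]
    exact (LinearMap.ker Blin).liftQ_apply (A' : H →ₗ[ℂ] K) h
  have hS₀norm : ∀ x : LinearMap.range Blin, ‖S₀ x‖ = ‖x‖ := by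
    rintro ⟨x, h, rfl⟩
    rw [hS₀ h]
    have : ‖(⟨Blin h, LinearMap.mem_range_self _ h⟩ : LinearMap.range Blin)‖ = ‖B' h‖ := rfl
    rw [this, hnorm' h]
  let Siso : LinearMap.range Blin →ₗᵢ[ℂ] K := ⟨S₀, hS₀norm⟩
  let e : LinearMap.range Blin →L[ℂ] K := (LinearMap.range Blin).subtypeL
  have hcoe : ∀ x : LinearMap.range Blin, e x = x.1 := fun _ => rfl
  have h_unif : IsUniformInducing e := by
    have : Isometry (e : LinearMap.range Blin → K) := isometry_subtype_coe
    exact this.isUniformInducing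
  have h_dense : DenseRange e := by
    intro y
    have hy : (y : H) ∈ closure ((LinearMap.range (B : H →ₗ[ℂ] H) : Set H)) := by
      have h2 := Submodule.topologicalClosure_coe (LinearMap.range (B : H →ₗ[ℂ] H))
      rw [← h2]
      exact y.2
    have himg : (Subtype.val '' (Set.range e)) = (LinearMap.range (B : H →ₗ[ℂ] H) : Set H) := by
      ext x
      constructor
      · rintro ⟨z, ⟨⟨w, hw, rfl⟩, rfl⟩, rfl⟩
        exact ⟨hw, rfl⟩
      · rintro ⟨h, rfl⟩
        exact ⟨⟨B h, Submodule.le_topologicalClosure _ (LinearMap.mem_range_self _ h)⟩,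
          ⟨⟨⟨B h, Submodule.le_topologicalClosure _ (LinearMap.mem_range_self _ h)⟩,
            ⟨h, rfl⟩⟩, rfl⟩, rfl⟩
    rw [closure_subtype, himg]
    exact hy
  let S : K →L[ℂ] K := Siso.toContinuousLinearMap.extend e
  have hSe : ∀ x : LinearMap.range Blin, S (e x) = S₀ x := fun x =>
    ContinuousLinearMap.extend_eq (f := Siso.toContinuousLinearMap) (e := e) h_dense h_unif x
  have hSnorm : ∀ y : K, ‖S y‖ = ‖y‖ := by
    intro y
    refine DenseRange.induction_on h_dense y ?_ ?_
    · exact isClosed_eq S.continuous.norm continuous_norm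
    · intro x
      rw [hSe x]
      rw [hS₀norm x]
      rfl
  refine ⟨S, hSnorm, fun h => ?_⟩
  have hx : (⟨B h, Submodule.le_topologicalClosure _
      (LinearMap.mem_range_self (B : H →ₗ[ℂ] H) h)⟩ : K)
      = e ⟨⟨B h, Submodule.le_topologicalClosure _
        (LinearMap.mem_range_self (B : H →ₗ[ℂ] H) h)⟩, ⟨h, rfl⟩⟩ := rfl
  rw [hx, hSe]
  exact hS₀ h

/-- Let `T` be a contraction and `Q ≥ 0` with `Q² = SOT-lim T^m T*^m`. Then
`T Q² T* ≤ Q²`; there is a contraction `T̃` on the closure of `ran Q` with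
`T̃* (Q h) = Q (T* h)`, and `T̃` is a co-isometry, i.e. `T Q² T* = Q²`. -/
theorem contraction_limit_coisometry {H : Type*} [NormedAddCommGroup H]
    [InnerProductSpace ℂ H] [CompleteSpace H] (T Q : H →L[ℂ] H)
    (hT : ‖T‖ ≤ 1) (hQ : Q.IsPositive)
    (hlim : ∀ h : H,
      Tendsto (fun m : ℕ => (T ^ m * (adjoint T) ^ m) h) atTop (𝓝 ((Q ^ 2) h))) :
    (Q ^ 2 - T * Q ^ 2 * adjoint T).IsPositive ∧
    (∃ Tt : (LinearMap.range (Q : H →ₗ[ℂ] H)).topologicalClosure →L[ℂ]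
        (LinearMap.range (Q : H →ₗ[ℂ] H)).topologicalClosure,
      ‖Tt‖ ≤ 1 ∧
      (∀ h : H,
        adjoint Tt ⟨Q h, Submodule.le_topologicalClosure _
            (LinearMap.mem_range_self (Q : H →ₗ[ℂ] H) h)⟩
          = ⟨Q (adjoint T h), Submodule.le_topologicalClosure _
              (LinearMap.mem_range_self (Q : H →ₗ[ℂ] H) (adjoint T h))⟩) ∧
      Tt ∘L adjoint Tt = 1) ∧
    T * Q ^ 2 * adjoint T = Q ^ 2 := by
  -- Step 1: the key identity `T Q² T* = Q²`.
  have key : T * Q ^ 2 * adjoint T = Q ^ 2 := by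
    ext h
    have h1 : Tendsto (fun m : ℕ => (T ^ (m + 1) * (adjoint T) ^ (m + 1)) h) atTop
        (𝓝 ((Q ^ 2) h)) := (hlim h).comp (tendsto_add_atTop_nat 1)
    have h2 : Tendsto (fun m : ℕ => T ((T ^ m * (adjoint T) ^ m) (adjoint T h))) atTop
        (𝓝 (T ((Q ^ 2) (adjoint T h)))) :=
      (T.continuous.tendsto _).comp (hlim (adjoint T h))
    have h3 : (fun m : ℕ => T ((T ^ m * (adjoint T) ^ m) (adjoint T h)))
        = fun m : ℕ => (T ^ (m + 1) * (adjoint T) ^ (m + 1)) h := by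
      funext m
      have e1 : T ^ (m + 1) = T * T ^ m := pow_succ' T m
      have e2 : (adjoint T) ^ (m + 1) = (adjoint T) ^ m * adjoint T := pow_succ _ m
      rw [e1, e2]
      simp [mul_apply]
    rw [h3] at h2
    have := tendsto_nhds_unique h2 h1
    simpa [mul_apply] using this
  -- Step 2: the norm identity `‖Q T* h‖ = ‖Q h‖`.
  have hQsa : adjoint Q = Q := hQ.isSelfAdjoint
  have innerQQ : ∀ a : H, ⟪Q a, Q a⟫_ℂ = ⟪a, (Q ^ 2) a⟫_ℂ := by
    intro a
    rw [pow_two, ContinuousLinearMap.mul_apply]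
    nth_rewrite 1 [← hQsa]
    rw [adjoint_inner_left]
  have hinner : ∀ h : H, ⟪Q (adjoint T h), Q (adjoint T h)⟫_ℂ = ⟪Q h, Q h⟫_ℂ := by
    intro h
    rw [innerQQ, innerQQ]
    nth_rewrite 2 [← key]
    have : (T * Q ^ 2 * adjoint T) h = T ((Q ^ 2) (adjoint T h)) := by simp [mul_apply]
    rw [this, adjoint_inner_left]
  have hnorm : ∀ h : H, ‖(Q ∘L adjoint T) h‖ = ‖Q h‖ := by
    intro h
    have := hinner h
    rw [inner_self_eq_norm_sq_to_K, inner_self_eq_norm_sq_to_K] at this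
    have h2 : ‖Q (adjoint T h)‖ ^ 2 = ‖Q h‖ ^ 2 := by exact_mod_cast this
    exact (sq_eq_sq₀ (norm_nonneg _) (norm_nonneg _)).mp h2
  have hmem : ∀ h : H, (Q ∘L adjoint T) h ∈
      (LinearMap.range (Q : H →ₗ[ℂ] H)).topologicalClosure := fun h =>
    Submodule.le_topologicalClosure _ (LinearMap.mem_range_self _ (adjoint T h))
  obtain ⟨S, hSnorm, hSeq⟩ := exists_isometry_extension (Q ∘L adjoint T) Q hnorm hmem
  have hco : adjoint S ∘L S = 1 := (norm_map_iff_adjoint_comp_self S).mp hSnorm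
  refine ⟨?_, ⟨adjoint S, ?_, ?_, ?_⟩, key⟩
  · rw [key, sub_self]
    exact isPositive_zero
  · have hn : ‖adjoint S‖ = ‖S‖ := LinearIsometryEquiv.norm_map ContinuousLinearMap.adjoint S
    rw [hn]
    refine opNorm_le_bound _ zero_le_one fun y => ?_
    rw [hSnorm y, one_mul]
  · intro h
    rw [adjoint_adjoint]
    exact hSeq h
  · rw [adjoint_adjoint]
    exact hco
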